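/- Let f be a nonconstant map in C(Σ, M). Then there exist ε > 0 and a compact subset K of ℂ not containing 0 such that for every h ∈ C(Σ, M) with d(h, f) < ε and every nonzero a ∈ ℂ with a ∉ K, one has d(h ∘ g_a, f) ≥ ε. In particular, for every nonzero a ∉ K the reparametrized map f ∘ g_a satisfies d(f ∘ g_a, f) ≥ ε, i.e. the orbit of f under ℂ* never returns to the ε-neighborhood of f outside the compact set K. -/

import Mathlib

open OnePoint Topology Filter

/-- The reparametrization `g_a : Σ → Σ` of the Riemann sphere `Σ = OnePoint ℂ`
extending `z ↦ a · z` on `ℂ` and fixing the point at infinity. -/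
noncomputable def gA (a : ℂ) (ha : a ≠ 0) : C(OnePoint ℂ, OnePoint ℂ) where
  toFun := OnePoint.map (fun z => a * z)
  continuous_toFun := (Homeomorph.onePointCongr (Homeomorph.mulLeft₀ a ha)).continuous

/-- For a nonconstant continuous map `f : Σ → M`, the `ℂ*`-orbit of any map near `f` never
returns to a small neighbourhood of `f` outside a compact set of reparametrizations; in
particular the orbit of `f` itself never returns to the `ε`-neighbourhood of `f`. -/
theorem orbit_never_returns {M : Type*} [MetricSpace M] [CompactSpace M]
    (f : C(OnePoint ℂ, M)) (hf : ∃ x y, f x ≠ f y) :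
    ∃ ε > 0, ∃ K : Set ℂ, IsCompact K ∧ (0 : ℂ) ∉ K ∧
      (∀ h : C(OnePoint ℂ, M), dist h f < ε →
        ∀ (a : ℂ) (ha : a ≠ 0), a ∉ K → ε ≤ dist (h.comp (gA a ha)) f) ∧
      (∀ (a : ℂ) (ha : a ≠ 0), a ∉ K → ε ≤ dist (f.comp (gA a ha)) f) := by
  classical
  set c0 : M := f ((0 : ℂ) : OnePoint ℂ) with hc0
  set ci : M := f ∞ with hci
  -- Tendsto towards infinity
  have hti : Filter.Tendsto (fun z : ℂ => f (z : OnePoint ℂ)) (Filter.cocompact ℂ) (𝓝 ci) := by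
    have h1 : Filter.Tendsto (fun z : ℂ => (z : OnePoint ℂ)) (Filter.cocompact ℂ) (𝓝 (∞ : OnePoint ℂ)) := by
      rw [← Filter.coclosedCompact_eq_cocompact]
      exact OnePoint.tendsto_coe_infty
    exact (f.continuous.tendsto ∞).comp h1
  -- Step 1: a nonzero point whose value differs from `ci`
  have h1 : ∃ p : ℂ, p ≠ 0 ∧ f (p : OnePoint ℂ) ≠ ci := by
    by_contra hc
    push_neg at hc
    have h0 : f ((0 : ℂ) : OnePoint ℂ) = ci := by
      have ht : Filter.Tendsto (fun z : ℂ => f (z : OnePoint ℂ)) (𝓝[≠] (0 : ℂ))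
          (𝓝 (f ((0 : ℂ) : OnePoint ℂ))) :=
        ((f.continuous.comp OnePoint.continuous_coe).tendsto 0).mono_left nhdsWithin_le_nhds
      have heq : (fun z : ℂ => f (z : OnePoint ℂ)) =ᶠ[𝓝[≠] (0 : ℂ)] fun _ => ci :=
        eventually_nhdsWithin_of_forall (fun z hz => hc z hz)
      exact tendsto_nhds_unique (ht.congr' heq) tendsto_const_nhds
    obtain ⟨x, y, hxy⟩ := hf
    have hall : ∀ x : OnePoint ℂ, f x = ci := by
      intro x
      cases x with
      | infty => rfl
      | coe z =>
        by_cases hz : z = 0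
        · rw [hz]; exact h0
        · exact hc z hz
    exact hxy ((hall x).trans (hall y).symm)
  obtain ⟨p, hp0, hpci⟩ := h1
  -- Step 2: a nonzero point whose value differs from `c0`
  have h2 : ∃ q : ℂ, q ≠ 0 ∧ f (q : OnePoint ℂ) ≠ c0 := by
    by_contra hc
    push_neg at hc
    have hic : ci = c0 := by
      have hmem : {z : ℂ | z ≠ 0} ∈ Filter.cocompact ℂ := by
        rw [Filter.mem_cocompact]
        exact ⟨{0}, isCompact_singleton, fun z hz => by simpa using hz⟩
      have heq : (fun z : ℂ => f (z : OnePoint ℂ)) =ᶠ[Filter.cocompact ℂ] fun _ => c0 :=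
        Filter.mem_of_superset hmem (fun z hz => hc z hz)
      exact tendsto_nhds_unique (hti.congr' heq) tendsto_const_nhds
    exact hpci (by rw [hic]; exact hc p hp0)
  obtain ⟨q, hq0, hqc0⟩ := h2
  set d1 : ℝ := dist (f (p : OnePoint ℂ)) ci with hd1
  set d2 : ℝ := dist (f (q : OnePoint ℂ)) c0 with hd2
  have hd1pos : 0 < d1 := dist_pos.2 hpci
  have hd2pos : 0 < d2 := dist_pos.2 hqc0
  set ε : ℝ := min d1 d2 / 4 with hε
  have hεpos : 0 < ε := by
    have := lt_min hd1pos hd2pos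
    positivity
  have h4ε1 : 4 * ε ≤ d1 := by
    have := min_le_left d1 d2; rw [hε]; linarith
  have h4ε2 : 4 * ε ≤ d2 := by
    have := min_le_right d1 d2; rw [hε]; linarith
  -- Step 4: far values are close to `ci`
  obtain ⟨R, hRpos, hRfar⟩ :
      ∃ R : ℝ, 0 < R ∧ ∀ z : ℂ, R ≤ ‖z‖ → dist (f (z : OnePoint ℂ)) ci < ε := by
    have hmem : {z : ℂ | dist (f (z : OnePoint ℂ)) ci < ε} ∈ Filter.cocompact ℂ := by
      have := hti (Metric.ball_mem_nhds ci hεpos)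
      simpa [Metric.mem_ball, Set.preimage] using this
    rw [Filter.mem_cocompact] at hmem
    obtain ⟨t, htc, hts⟩ := hmem
    obtain ⟨R, hR⟩ := htc.isBounded.subset_closedBall 0
    refine ⟨max R 0 + 1, by positivity, fun z hz => hts ?_⟩
    intro hzt
    have := hR hzt
    rw [Metric.mem_closedBall, dist_zero_right] at this
    have : ‖z‖ ≤ max R 0 := le_trans this (le_max_left _ _)
    linarith
  -- Step 5: small values are close to `c0`
  obtain ⟨r, hrpos, hrnear⟩ :
      ∃ r : ℝ, 0 < r ∧ ∀ z : ℂ, ‖z‖ < r → dist (f (z : OnePoint ℂ)) c0 < ε := by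
    have hct : ContinuousAt (fun z : ℂ => f (z : OnePoint ℂ)) 0 :=
      (f.continuous.comp OnePoint.continuous_coe).continuousAt
    rw [Metric.continuousAt_iff] at hct
    obtain ⟨r, hr, hball⟩ := hct ε hεpos
    exact ⟨r, hr, fun z hz => hball (by rwa [dist_zero_right])⟩
  have hpn : 0 < ‖p‖ := norm_pos_iff.2 hp0
  have hqn : 0 < ‖q‖ := norm_pos_iff.2 hq0
  set r1 : ℝ := r / (2 * ‖q‖) with hr1
  set R1 : ℝ := R / ‖p‖ with hR1
  have hr1pos : 0 < r1 := by positivity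
  set K : Set ℂ := Metric.closedBall 0 R1 \ Metric.ball 0 r1 with hK
  have hKc : IsCompact K := (isCompact_closedBall 0 R1).diff Metric.isOpen_ball
  have h0K : (0 : ℂ) ∉ K := by
    intro h
    exact h.2 (Metric.mem_ball_self hr1pos)
  -- main estimate
  have key : ∀ h : C(OnePoint ℂ, M), dist h f < ε →
      ∀ (a : ℂ) (ha : a ≠ 0), a ∉ K → ε ≤ dist (h.comp (gA a ha)) f := by
    intro h hhf a ha haK
    have hcase : R1 < ‖a‖ ∨ ‖a‖ < r1 := by
      by_contra hcon
      push_neg at hcon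
      refine haK ⟨?_, ?_⟩
      · simpa [Metric.mem_closedBall, dist_zero_right] using hcon.1
      · intro hmem
        rw [Metric.mem_ball, dist_zero_right] at hmem
        linarith [hcon.2]
    rcases hcase with hbig | hsmall
    · -- use the point p
      have hap : R ≤ ‖a * p‖ := by
        rw [norm_mul]
        have : R1 * ‖p‖ ≤ ‖a‖ * ‖p‖ := by nlinarith
        rw [hR1] at this
        rw [div_mul_cancel₀ R (ne_of_gt hpn)] at this
        exact this
      have t4 : dist (f ((a * p : ℂ) : OnePoint ℂ)) ci < ε := hRfar _ hap
      have t1 : d1 ≤ dist (f (p : OnePoint ℂ)) (h ((a * p : ℂ) : OnePoint ℂ))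
          + dist (h ((a * p : ℂ) : OnePoint ℂ)) ci := dist_triangle _ _ _
      have t2 : dist (h ((a * p : ℂ) : OnePoint ℂ)) ci ≤
          dist (h ((a * p : ℂ) : OnePoint ℂ)) (f ((a * p : ℂ) : OnePoint ℂ))
          + dist (f ((a * p : ℂ) : OnePoint ℂ)) ci := dist_triangle _ _ _
      have t3 : dist (h ((a * p : ℂ) : OnePoint ℂ)) (f ((a * p : ℂ) : OnePoint ℂ)) ≤ dist h f :=
        ContinuousMap.dist_apply_le_dist _
      have t7 : dist ((h.comp (gA a ha)) (p : OnePoint ℂ)) (f (p : OnePoint ℂ)) ≤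
          dist (h.comp (gA a ha)) f := ContinuousMap.dist_apply_le_dist _
      have t8 : (h.comp (gA a ha)) (p : OnePoint ℂ) = h ((a * p : ℂ) : OnePoint ℂ) := by
        simp [gA, ContinuousMap.comp_apply]
        rfl
      rw [t8] at t7
      rw [dist_comm] at t7
      linarith
    · -- use the point q
      have haq : ‖a * q‖ < r := by
        rw [norm_mul]
        have hlt : ‖a‖ * ‖q‖ < r1 * ‖q‖ := by nlinarith
        have h2 : r1 * ‖q‖ = r / 2 := by
          rw [hr1, div_mul_eq_mul_div, mul_comm r ‖q‖, mul_comm 2 ‖q‖,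
            mul_div_mul_left _ _ (ne_of_gt hqn)]
        linarith
      have t4 : dist (f ((a * q : ℂ) : OnePoint ℂ)) c0 < ε := hrnear _ haq
      have t1 : d2 ≤ dist (f (q : OnePoint ℂ)) (h ((a * q : ℂ) : OnePoint ℂ))
          + dist (h ((a * q : ℂ) : OnePoint ℂ)) c0 := dist_triangle _ _ _
      have t2 : dist (h ((a * q : ℂ) : OnePoint ℂ)) c0 ≤
          dist (h ((a * q : ℂ) : OnePoint ℂ)) (f ((a * q : ℂ) : OnePoint ℂ))
          + dist (f ((a * q : ℂ) : OnePoint ℂ)) c0 := dist_triangle _ _ _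
      have t3 : dist (h ((a * q : ℂ) : OnePoint ℂ)) (f ((a * q : ℂ) : OnePoint ℂ)) ≤ dist h f :=
        ContinuousMap.dist_apply_le_dist _
      have t7 : dist ((h.comp (gA a ha)) (q : OnePoint ℂ)) (f (q : OnePoint ℂ)) ≤
          dist (h.comp (gA a ha)) f := ContinuousMap.dist_apply_le_dist _
      have t8 : (h.comp (gA a ha)) (q : OnePoint ℂ) = h ((a * q : ℂ) : OnePoint ℂ) := by
        simp [gA, ContinuousMap.comp_apply]
        rfl
      rw [t8] at t7
      rw [dist_comm] at t7
      linarith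
  exact ⟨ε, hεpos, K, hKc, h0K, key,
    fun a ha haK => key f (by simpa [dist_self] using hεpos) a ha haK⟩
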